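/- Let Ω ⊆ ℂ be an unbounded domain (nonempty unbounded connected open set) and let J ⊆ ∂Ω be a nonempty compact set without isolated points. Let S(Ω,J) be the set of all f ∈ R̃(Ω) such that f has infinite difference quotients at every point z₀ ∈ J along J. Then S(Ω,J) is either empty or a dense Gδ subset of R̃(Ω). -/

import Mathlib

open scoped Classical in
/-- Extend a continuous map on `E` to all of `ℂ` by zero. -/
noncomputable def extendFn (E : Set ℂ) (f : C(E, ℂ)) : ℂ → ℂ :=
  fun z => if h : z ∈ E then f ⟨z, h⟩ else 0

/-- `f` has infinite difference quotients at `z₀` along `J`: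
`limsup_{z → z₀, z ∈ J \ {z₀}} |f z - f z₀| / |z - z₀| = +∞`. -/
def HasInfDiffQuot (f : ℂ → ℂ) (J : Set ℂ) (z₀ : ℂ) : Prop :=
  ∀ M > (0:ℝ), ∀ δ > (0:ℝ), ∃ z ∈ J,
    0 < ‖z - z₀‖ ∧ ‖z - z₀‖ < δ ∧
      M * ‖z - z₀‖ < ‖f z - f z₀‖

/-- Restrictions to `E` of rational functions with poles off `E`. -/
def ratRestrict (E : Set ℂ) : Set C(E, ℂ) :=
  {f | ∃ p q : Polynomial ℂ, (∀ z ∈ E, q.eval z ≠ 0) ∧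
    ∀ z : E, f z = p.eval (z : ℂ) / q.eval (z : ℂ)}

open Set Topology

lemma extendFn_eq (E : Set ℂ) (f : C(E, ℂ)) {z : ℂ} (h : z ∈ E) :
    extendFn E f z = f ⟨z, h⟩ := dif_pos h

lemma hasInfDiffQuot_congr {f g : ℂ → ℂ} {J : Set ℂ} {z₀ : ℂ}
    (hfg : ∀ z ∈ insert z₀ J, f z = g z) (hf : HasInfDiffQuot f J z₀) :
    HasInfDiffQuot g J z₀ := by
  intro M hM δ hδ
  obtain ⟨z, hzJ, h1, h2, h3⟩ := hf M hM δ hδ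
  refine ⟨z, hzJ, h1, h2, ?_⟩
  rwa [← hfg z (Or.inr hzJ), ← hfg z₀ (Or.inl rfl)]

lemma hasInfDiffQuot_add_lipschitz {f g : ℂ → ℂ} {J : Set ℂ} {z₀ : ℂ}
    (hf : HasInfDiffQuot f J z₀) {c : ℂ} (hc : c ≠ 0) {L δ₀ : ℝ} (hL : 0 ≤ L) (hδ₀ : 0 < δ₀)
    (hg : ∀ z, ‖z - z₀‖ < δ₀ → ‖g z - g z₀‖ ≤ L * ‖z - z₀‖) :
    HasInfDiffQuot (fun z => g z + c * f z) J z₀ := by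
  intro M hM δ hδ
  have hcabs : 0 < ‖c‖ := by simpa [norm_pos_iff] using hc
  obtain ⟨z, hzJ, h1, h2, h3⟩ := hf ((M + L) / ‖c‖)
    (div_pos (by linarith) hcabs) (min δ δ₀) (lt_min hδ hδ₀)
  refine ⟨z, hzJ, h1, h2.trans_le (min_le_left _ _), ?_⟩
  have hz0 : ‖z - z₀‖ < δ₀ := h2.trans_le (min_le_right _ _)
  have hgz := hg z hz0
  have key : (M + L) * ‖z - z₀‖ < ‖c * (f z - f z₀)‖ := by
    rw [norm_mul]
    calc (M + L) * ‖z - z₀‖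
        = ‖c‖ * (((M + L) / ‖c‖) * ‖z - z₀‖) := by
          field_simp
      _ < ‖c‖ * ‖f z - f z₀‖ := by
          exact mul_lt_mul_of_pos_left h3 hcabs
  calc M * ‖z - z₀‖
      = (M + L) * ‖z - z₀‖ - L * ‖z - z₀‖ := by ring
    _ < ‖c * (f z - f z₀)‖ - ‖g z - g z₀‖ := by
        have := hgz; linarith
    _ ≤ ‖g z + c * f z - (g z₀ + c * f z₀)‖ := by
        have : g z + c * f z - (g z₀ + c * f z₀) = c * (f z - f z₀) + (g z - g z₀) := by ring
        rw [this]
        have h := norm_add_le (c * (f z - f z₀) + (g z - g z₀)) (-(g z - g z₀))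
        simp only [add_neg_cancel_right, norm_neg] at h
        linarith


lemma isOpen_Un (E J : Set ℂ) (hJE : J ⊆ E) (hJcpt : IsCompact J) (hJne : J.Nonempty)
    (M δ : ℝ) (hM : 0 ≤ M) (hδ : 0 < δ) :
    IsOpen {f : C(E, ℂ) | ∀ z₀ ∈ J, ∃ z ∈ J, 0 < ‖z - z₀‖ ∧
      ‖z - z₀‖ < δ ∧ M * ‖z - z₀‖ <
        ‖extendFn E f z - extendFn E f z₀‖} := by
  rw [isOpen_iff_mem_nhds]
  intro f hf
  have key : ∀ z₀ ∈ J, ∃ (U : Set ℂ) (ε : ℝ), IsOpen U ∧ z₀ ∈ U ∧ 0 < ε ∧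
      ∀ g : C(E, ℂ), (∀ x : E, (x : ℂ) ∈ J → ‖g x - f x‖ < ε) →
      ∀ w ∈ U ∩ J, ∃ z ∈ J, 0 < ‖z - w‖ ∧ ‖z - w‖ < δ ∧
        M * ‖z - w‖ < ‖extendFn E g z - extendFn E g w‖ := by
    intro z₀ hz₀
    obtain ⟨z, hzJ, h1, h2, h3⟩ := hf z₀ hz₀
    have hzE : z ∈ E := hJE hzJ
    have hz₀E : z₀ ∈ E := hJE hz₀
    rw [extendFn_eq E f hzE, extendFn_eq E f hz₀E] at h3
    set γ : ℝ := ‖f ⟨z, hzE⟩ - f ⟨z₀, hz₀E⟩‖ - M * ‖z - z₀‖ with hγ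
    have hγpos : 0 < γ := by simp only [hγ]; linarith
    have hT : IsOpen {w : E | M * ‖z - (w : ℂ)‖ + γ / 2 <
        ‖f ⟨z, hzE⟩ - f w‖} := by
      exact isOpen_lt
        ((continuous_const.mul (continuous_norm.comp
          (continuous_const.sub continuous_subtype_val))).add continuous_const)
        (continuous_norm.comp (continuous_const.sub f.continuous))
    obtain ⟨O, hOopen, hOT⟩ := isOpen_induced_iff.mp hT
    set ρ : ℝ := min (‖z - z₀‖) (δ - ‖z - z₀‖) with hρ
    have hρpos : 0 < ρ := lt_min h1 (by linarith)
    refine ⟨O ∩ Metric.ball z₀ ρ, γ / 4, hOopen.inter Metric.isOpen_ball, ⟨?_, ?_⟩,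
      by linarith, ?_⟩
    · have : (⟨z₀, hz₀E⟩ : E) ∈ Subtype.val ⁻¹' O := by
        rw [hOT]; simp only [mem_setOf_eq]; linarith
      exact this
    · exact Metric.mem_ball_self hρpos
    · intro g hg w ⟨⟨hwO, hwball⟩, hwJ⟩
      have hwE : w ∈ E := hJE hwJ
      have hwz : ‖w - z₀‖ < ρ := by
        rw [Metric.mem_ball, Complex.dist_eq] at hwball; exact hwball
      have hwne : 0 < ‖z - w‖ := by
        have h₁ : ‖w - z₀‖ < ‖z - z₀‖ :=
          hwz.trans_le (min_le_left _ _)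
        have : z ≠ w := by rintro rfl; exact absurd h₁ (lt_irrefl _)
        simpa [norm_pos_iff, sub_eq_zero] using this
      have hwδ : ‖z - w‖ < δ := by
        have := norm_sub_le_norm_sub_add_norm_sub z z₀ w
        have h₂ : ‖w - z₀‖ < δ - ‖z - z₀‖ :=
          hwz.trans_le (min_le_right _ _)
        have : ‖z - w‖ ≤ ‖z - z₀‖ + ‖z₀ - w‖ := by
          simpa using norm_sub_le_norm_sub_add_norm_sub z z₀ w
        rw [show z₀ - w = -(w - z₀) by ring, norm_neg] at this
        linarith
      have hwT : M * ‖z - w‖ + γ / 2 < ‖f ⟨z, hzE⟩ - f ⟨w, hwE⟩‖ := by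
        have : (⟨w, hwE⟩ : E) ∈ Subtype.val ⁻¹' O := hwO
        rw [hOT] at this
        exact this
      refine ⟨z, hzJ, hwne, hwδ, ?_⟩
      rw [extendFn_eq E g hzE, extendFn_eq E g hwE]
      have hz' := hg ⟨z, hzE⟩ hzJ
      have hw' := hg ⟨w, hwE⟩ hwJ
      have tri : ‖f ⟨z, hzE⟩ - f ⟨w, hwE⟩‖ ≤
          ‖g ⟨z, hzE⟩ - g ⟨w, hwE⟩‖ + ‖g ⟨z, hzE⟩ - f ⟨z, hzE⟩‖
            + ‖g ⟨w, hwE⟩ - f ⟨w, hwE⟩‖ := by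
        have := norm_add_le (g ⟨z, hzE⟩ - g ⟨w, hwE⟩ - (g ⟨z, hzE⟩ - f ⟨z, hzE⟩))
          (g ⟨w, hwE⟩ - f ⟨w, hwE⟩)
        have e : g ⟨z, hzE⟩ - g ⟨w, hwE⟩ - (g ⟨z, hzE⟩ - f ⟨z, hzE⟩) + (g ⟨w, hwE⟩ - f ⟨w, hwE⟩)
            = f ⟨z, hzE⟩ - f ⟨w, hwE⟩ := by ring
        rw [e] at this
        have h4 : ‖g ⟨z, hzE⟩ - g ⟨w, hwE⟩ - (g ⟨z, hzE⟩ - f ⟨z, hzE⟩)‖ ≤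
            ‖g ⟨z, hzE⟩ - g ⟨w, hwE⟩‖ + ‖g ⟨z, hzE⟩ - f ⟨z, hzE⟩‖ := by
          have e2 : g ⟨z, hzE⟩ - g ⟨w, hwE⟩ - (g ⟨z, hzE⟩ - f ⟨z, hzE⟩)
              = g ⟨z, hzE⟩ - g ⟨w, hwE⟩ + (f ⟨z, hzE⟩ - g ⟨z, hzE⟩) := by ring
          rw [e2, show ‖g ⟨z, hzE⟩ - f ⟨z, hzE⟩‖
              = ‖f ⟨z, hzE⟩ - g ⟨z, hzE⟩‖ from norm_sub_rev _ _]
          exact norm_add_le _ _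
        exact this.trans (add_le_add_left h4 _)
      linarith
  choose U ε hUopen hUmem hεpos hrob using key
  obtain ⟨t, ht⟩ := hJcpt.elim_nhds_subcover' (fun x hx => U x hx)
    (fun x hx => (hUopen x hx).mem_nhds (hUmem x hx))
  have htne : t.Nonempty := by
    obtain ⟨z₀, hz₀⟩ := hJne
    have h := ht hz₀
    simp only [mem_iUnion, exists_prop] at h
    obtain ⟨x, hx, _⟩ := h
    exact ⟨x, hx⟩
  set ε₀ : ℝ := t.inf' htne (fun x => ε x.1 x.2) with hε₀
  have hε₀pos : 0 < ε₀ := by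
    rw [hε₀, Finset.lt_inf'_iff]
    exact fun x _ => hεpos x.1 x.2
  set K : Set E := Subtype.val ⁻¹' J with hK
  have hKc : IsCompact K :=
    Topology.IsInducing.subtypeVal.isCompact_preimage' hJcpt
      (by simpa [Subtype.range_val] using hJE)
  haveI : CompactSpace K := isCompact_iff_compactSpace.mp hKc
  have hcont : Continuous fun g : C(E, ℂ) => g.restrict K :=
    ContinuousMap.continuous_restrict K
  refine Filter.mem_of_superset
    ((hcont.isOpen_preimage (Metric.ball (f.restrict K) ε₀) Metric.isOpen_ball).mem_nhds ?_) ?_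
  · simp [Metric.mem_ball, hε₀pos]
  · intro g hg z₀ hz₀
    have hz := ht hz₀
    simp only [mem_iUnion, exists_prop] at hz
    obtain ⟨x, hx, hzU⟩ := hz
    refine hrob x.1 x.2 g ?_ z₀ ⟨hzU, hz₀⟩
    intro y hy
    have h1 : dist (g y) (f y) ≤ dist (g.restrict K) (f.restrict K) := by
      have h1' := ContinuousMap.dist_apply_le_dist
        (f := g.restrict K) (g := f.restrict K) (⟨y, hy⟩ : K)
      simpa [ContinuousMap.restrict_apply] using h1'
    have h2 : dist (g.restrict K) (f.restrict K) < ε₀ := by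
      simpa [Metric.mem_ball] using hg
    have h3 : ε₀ ≤ ε x.1 x.2 := Finset.inf'_le _ hx
    rw [Complex.dist_eq] at h1
    linarith

lemma rat_lipschitz (p q : Polynomial ℂ) {z₀ : ℂ} (hq : q.eval z₀ ≠ 0) :
    ∃ L δ₀ : ℝ, 0 ≤ L ∧ 0 < δ₀ ∧ ∀ z, ‖z - z₀‖ < δ₀ →
      ‖p.eval z / q.eval z - p.eval z₀ / q.eval z₀‖ ≤ L * ‖z - z₀‖ := by
  have hd : DifferentiableAt ℂ (fun z => p.eval z / q.eval z) z₀ :=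
    (p.differentiableAt).div (q.differentiableAt) hq
  have hO := hd.isBigO_sub
  obtain ⟨C, hC, h⟩ := hO.exists_pos
  rw [Asymptotics.isBigOWith_iff] at h
  rw [Metric.eventually_nhds_iff] at h
  obtain ⟨δ₀, hδ₀, h⟩ := h
  refine ⟨C, δ₀, hC.le, hδ₀, fun z hz => ?_⟩
  have := h (y := z) (by simpa [Complex.dist_eq] using hz)
  simpa using this

lemma ratRestrict_affine {E : Set ℂ} {r h : C(E, ℂ)} (hr : r ∈ ratRestrict E)
    (hh : h ∈ ratRestrict E) (c : ℂ) : r + c • h ∈ ratRestrict E := by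
  obtain ⟨p₁, q₁, hq₁, he₁⟩ := hr
  obtain ⟨p₂, q₂, hq₂, he₂⟩ := hh
  refine ⟨p₁ * q₂ + Polynomial.C c * p₂ * q₁, q₁ * q₂,
    fun z hz => by simpa [Polynomial.eval_mul] using mul_ne_zero (hq₁ z hz) (hq₂ z hz), fun z => ?_⟩
  have h1 := hq₁ z z.2
  have h2 := hq₂ z z.2
  simp only [ContinuousMap.add_apply, ContinuousMap.smul_apply, he₁ z, he₂ z,
    Polynomial.eval_mul, Polynomial.eval_add, Polynomial.eval_C, smul_eq_mul]
  field_simp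

/-- Let `Ω ⊆ ℂ` be an unbounded domain and `J ⊆ ∂Ω` a nonempty compact set without isolated
points.  Let `R̃(Ω)` be the closure in `C(cl Ω, ℂ)`, endowed with the topology of uniform
convergence on compact subsets of `cl Ω` (the compact-open topology), of the restrictions of
rational functions with poles off `cl Ω`, and let `S(Ω, J)` be the set of `f ∈ R̃(Ω)` having
infinite difference quotients at every point of `J` along `J`.  Then `S(Ω, J)` is either empty
or a dense `Gδ` subset of `R̃(Ω)`. -/
theorem dichotomy_unbounded (Ω : Set ℂ) (hΩopen : IsOpen Ω) (hΩconn : IsConnected Ω)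
    (hΩunbdd : ¬ Bornology.IsBounded Ω)
    (J : Set ℂ) (hJne : J.Nonempty) (hJfr : J ⊆ frontier Ω) (hJcpt : IsCompact J)
    (hJperf : ∀ z ∈ J, z ∈ closure (J \ {z})) :
    let R : Set C(closure Ω, ℂ) := closure (ratRestrict (closure Ω))
    let S : Set ↥R :=
      {f | ∀ z₀ ∈ J, HasInfDiffQuot (extendFn (closure Ω) f.1) J z₀}
    S = ∅ ∨ (Dense S ∧ IsGδ S) := by
  intro R S
  by_cases hS : S = ∅
  · exact Or.inl hS
  right
  have hJE : J ⊆ closure Ω := hJfr.trans frontier_subset_closure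
  haveI : LocallyCompactSpace ↥(closure Ω) := isClosed_closure.locallyCompactSpace
  have Sdef : S = ⋂ n : ℕ, {f : ↥R | ∀ z₀ ∈ J, ∃ z ∈ J, 0 < ‖z - z₀‖ ∧
      ‖z - z₀‖ < 1 / ((n : ℝ) + 1) ∧ ((n : ℝ) + 1) * ‖z - z₀‖ <
        ‖extendFn (closure Ω) f.1 z - extendFn (closure Ω) f.1 z₀‖} := by
    ext f
    simp only [mem_iInter, mem_setOf_eq, S]
    constructor
    · intro hf n z₀ hz₀
      exact hf z₀ hz₀ ((n : ℝ) + 1) (by positivity) (1 / ((n : ℝ) + 1)) (by positivity)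
    · intro hf z₀ hz₀ M hM δ hδ
      obtain ⟨n, hn⟩ := exists_nat_gt (max M (1 / δ))
      obtain ⟨z, hz, h1, h2, h3⟩ := hf n z₀ hz₀
      have hn1 : (1:ℝ)/δ < n := lt_of_le_of_lt (le_max_right _ _) hn
      have hMn : M < (n : ℝ) := lt_of_le_of_lt (le_max_left _ _) hn
      refine ⟨z, hz, h1, ?_, ?_⟩
      · refine h2.trans ?_
        rw [div_lt_iff₀ (by positivity)]
        rw [div_lt_iff₀ hδ] at hn1
        nlinarith
      · calc M * ‖z - z₀‖ ≤ ((n : ℝ) + 1) * ‖z - z₀‖ :=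
            mul_le_mul_of_nonneg_right (by linarith) (by positivity)
          _ < _ := h3
  constructor
  · -- density
    obtain ⟨f₀, hf₀⟩ := Set.nonempty_iff_ne_empty.mpr hS
    rw [dense_iff_inter_open]
    rintro O hO ⟨g, hgO⟩
    obtain ⟨O', hO'open, hO'⟩ := isOpen_induced_iff.mp hO
    have hgO' : g.1 ∈ O' := by rw [← hO'] at hgO; exact hgO
    have h0 : (fun h : C((closure Ω), ℂ) => g.1 + h) ⁻¹' O' ∈ 𝓝 (0 : C((closure Ω), ℂ)) := by
      apply (continuous_add_left g.1).continuousAt.preimage_mem_nhds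
      simpa using hO'open.mem_nhds hgO'
    obtain ⟨V, hV, hVV⟩ := exists_nhds_zero_half h0
    have htr : ((fun h : C((closure Ω), ℂ) => h - g.1) ⁻¹' V) ∈ 𝓝 g.1 := by
      apply (continuous_sub_right g.1).continuousAt.preimage_mem_nhds
      simpa using hV
    obtain ⟨r, hrV, hrRat⟩ := mem_closure_iff_nhds.mp g.2 _ htr
    have hsm : Continuous fun c : ℂ => c • f₀.1 := continuous_id.smul continuous_const
    have hc0 : (fun c : ℂ => c • f₀.1) ⁻¹' V ∈ 𝓝 (0 : ℂ) := by
      apply hsm.continuousAt.preimage_mem_nhds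
      have e0 : ((0 : ℂ) • (f₀ : C(↑(closure Ω), ℂ))) = 0 := ContinuousMap.ext fun x => by simp
      simpa [e0] using hV
    obtain ⟨ρc, hρc, hball⟩ := Metric.mem_nhds_iff.mp hc0
    set c : ℂ := ((ρc / 2 : ℝ) : ℂ) with hcdef
    have hcne : c ≠ 0 := by
      simp only [hcdef, ne_eq, Complex.ofReal_eq_zero]
      positivity
    have hcV : c • f₀.1 ∈ V := by
      apply hball
      simp only [Metric.mem_ball, Complex.dist_eq, sub_zero, hcdef]
      rw [Complex.norm_real, Real.norm_eq_abs]
      rw [abs_of_pos (by positivity)]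
      linarith
    have hmemO' : r + c • f₀.1 ∈ O' := by
      have h5 : g.1 + (r - g.1 + c • f₀.1) ∈ O' := hVV _ hrV _ hcV
      have e : g.1 + (r - g.1 + c • f₀.1) = r + c • f₀.1 := by abel
      rwa [e] at h5
    have hsR : r + c • f₀.1 ∈ R := by
      have hcont2 : Continuous fun h : C((closure Ω), ℂ) => r + c • h :=
        continuous_const.add (continuous_id.const_smul c)
      have himg : (fun h : C((closure Ω), ℂ) => r + c • h) '' ratRestrict (closure Ω) ⊆ ratRestrict (closure Ω) := by
        rintro _ ⟨h, hh, rfl⟩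
        exact ratRestrict_affine hrRat hh c
      have h6 : r + c • f₀.1 ∈ closure ((fun h : C((closure Ω), ℂ) => r + c • h) '' ratRestrict (closure Ω)) :=
        image_closure_subset_closure_image hcont2 ⟨f₀.1, f₀.2, rfl⟩
      exact closure_mono himg h6
    refine ⟨⟨r + c • f₀.1, hsR⟩, ?_, ?_⟩
    · rw [← hO']; exact hmemO'
    · intro z₀ hz₀
      obtain ⟨p, q, hq, hpq⟩ := hrRat
      obtain ⟨L, δ₀, hL, hδ₀, hlip⟩ := rat_lipschitz p q (hq z₀ (hJE hz₀))
      have hidq := hasInfDiffQuot_add_lipschitz (hf₀ z₀ hz₀) hcne hL hδ₀ hlip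
      refine hasInfDiffQuot_congr
        (f := fun z => Polynomial.eval z p / Polynomial.eval z q + c * extendFn (closure Ω) f₀.1 z)
        ?_ hidq
      intro z hz
      have hzE : z ∈ (closure Ω) := by
        rcases hz with rfl | hz
        · exact hJE hz₀
        · exact hJE hz
      show Polynomial.eval z p / Polynomial.eval z q + c * extendFn (closure Ω) f₀.1 z
        = extendFn (closure Ω) (r + c • f₀.1) z
      rw [extendFn_eq (closure Ω) (r + c • f₀.1) hzE, extendFn_eq (closure Ω) f₀.1 hzE]
      simp [hpq ⟨z, hzE⟩, smul_eq_mul]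
  · -- Gδ
    rw [Sdef]
    refine IsGδ.iInter fun n => ?_
    have hop := isOpen_Un (closure Ω) J hJE hJcpt hJne ((n : ℝ) + 1) (1 / ((n : ℝ) + 1))
      (by positivity) (by positivity)
    exact (hop.preimage continuous_subtype_val).isGδ
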